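/- The ratio B_n / B_{n+1} of consecutive Bell numbers tends to 0 as n → ∞. -/

import Mathlib

open scoped Classical

/-- The Bell number `B k`: the number of equivalence relations on a `k`-element set. -/
noncomputable def bell (k : ℕ) : ℕ := Nat.card {r : Fin k → Fin k → Prop // Equivalence r}

/-- Model: idempotent, decreasing maps `Fin n → Fin n`. -/
def MP (n : ℕ) : Type := {f : Fin n → Fin n // (∀ i, f (f i) = f i) ∧ ∀ i, f i ≤ i}

noncomputable instance MP.fintype (n : ℕ) : Fintype (MP n) := by
  unfold MP; infer_instance

namespace BellAux

variable {n : ℕ}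

noncomputable def cls (r : Fin n → Fin n → Prop) (i : Fin n) : Finset (Fin n) :=
  Finset.univ.filter (fun j => r i j)

lemma cls_nonempty (r : Fin n → Fin n → Prop) (hr : Equivalence r) (i : Fin n) :
    (cls r i).Nonempty := ⟨i, by simp [cls, hr.refl i]⟩

noncomputable def mrep (r : Fin n → Fin n → Prop) (hr : Equivalence r) (i : Fin n) : Fin n :=
  (cls r i).min' (cls_nonempty r hr i)

lemma mrep_rel (r : Fin n → Fin n → Prop) (hr : Equivalence r) (i : Fin n) :
    r i (mrep r hr i) := by
  have := (cls r i).min'_mem (cls_nonempty r hr i)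
  simpa [cls, mrep] using this

lemma mrep_le (r : Fin n → Fin n → Prop) (hr : Equivalence r) {i j : Fin n} (h : r i j) :
    mrep r hr i ≤ j := Finset.min'_le _ _ (by simp [cls, h])

lemma mrep_congr (r : Fin n → Fin n → Prop) (hr : Equivalence r) {i j : Fin n} (h : r i j) :
    mrep r hr i = mrep r hr j := by
  apply le_antisymm
  · exact mrep_le r hr (hr.trans h (mrep_rel r hr j))
  · exact mrep_le r hr (hr.trans (hr.symm h) (mrep_rel r hr i))

lemma mrep_eq_iff (r : Fin n → Fin n → Prop) (hr : Equivalence r) {i j : Fin n} :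
    mrep r hr i = mrep r hr j ↔ r i j := by
  constructor
  · intro h
    exact hr.trans (mrep_rel r hr i) (h ▸ hr.symm (mrep_rel r hr j))
  · exact mrep_congr r hr

noncomputable def phi (p : {r : Fin n → Fin n → Prop // Equivalence r}) : MP n :=
  ⟨mrep p.1 p.2, fun i => mrep_congr p.1 p.2 (p.2.symm (mrep_rel p.1 p.2 i)),
   fun i => mrep_le p.1 p.2 (p.2.refl i)⟩

lemma phi_bijective : Function.Bijective (phi (n := n)) := by
  constructor
  · rintro ⟨r, hr⟩ ⟨r', hr'⟩ h
    have h' : mrep r hr = mrep r' hr' := congrArg Subtype.val h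
    apply Subtype.ext
    funext i j
    apply propext
    show r i j ↔ r' i j
    rw [← mrep_eq_iff r hr, ← mrep_eq_iff r' hr', h']
  · rintro ⟨f, hf1, hf2⟩
    have hr0 : Equivalence (fun i j : Fin n => f i = f j) :=
      ⟨fun _ => rfl, fun h => h.symm, fun h h' => h.trans h'⟩
    refine ⟨⟨fun i j => f i = f j, hr0⟩, ?_⟩
    apply Subtype.ext
    funext i
    show mrep _ hr0 i = f i
    apply le_antisymm
    · exact mrep_le _ hr0 (hf1 i).symm
    · have h := mrep_rel _ hr0 i
      calc f i = f (mrep _ hr0 i) := h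
        _ ≤ mrep _ hr0 i := hf2 _

lemma bell_eq (n : ℕ) : bell n = Fintype.card (MP n) := by
  rw [bell, Nat.card_eq_of_bijective (phi (n := n)) phi_bijective, Nat.card_eq_fintype_card]

lemma bell_pos (n : ℕ) : 0 < bell n := by
  rw [bell_eq]
  exact Fintype.card_pos_iff.mpr ⟨⟨id, fun i => rfl, fun i => le_refl i⟩⟩

/-! ### Lower bound `k ^ (n-k) ≤ B n` -/

noncomputable def lowFun (n k : ℕ) (hkn : k ≤ n) (g : Fin (n - k) → Fin k) : Fin n → Fin n :=
  fun i => if h : (i : ℕ) < k then i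
    else ⟨(g ⟨(i : ℕ) - k, by have := i.isLt; omega⟩ : ℕ), lt_of_lt_of_le (Fin.isLt _) hkn⟩

lemma lowFun_id {n k : ℕ} (hkn : k ≤ n) (g : Fin (n - k) → Fin k) (x : Fin n)
    (hx : (x : ℕ) < k) : lowFun n k hkn g x = x := dif_pos hx

lemma lowFun_lt (n k : ℕ) (hkn : k ≤ n) (g : Fin (n - k) → Fin k) (i : Fin n) :
    (lowFun n k hkn g i : ℕ) < k ∨ lowFun n k hkn g i = i := by
  by_cases h : (i : ℕ) < k
  · right; exact lowFun_id hkn g i h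
  · left
    show ((if h : (i : ℕ) < k then i
      else ⟨(g ⟨(i : ℕ) - k, by have := i.isLt; omega⟩ : ℕ),
        lt_of_lt_of_le (Fin.isLt _) hkn⟩ : Fin n) : ℕ) < k
    rw [dif_neg h]
    exact (g _).isLt

lemma lowFun_apply_ge {n k : ℕ} (hkn : k ≤ n) (g : Fin (n - k) → Fin k) (i : Fin n)
    (h : ¬ (i : ℕ) < k) :
    lowFun n k hkn g i
      = ⟨(g ⟨(i : ℕ) - k, by have := i.isLt; omega⟩ : ℕ), lt_of_lt_of_le (Fin.isLt _) hkn⟩ :=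
  dif_neg h

noncomputable def lowMP (n k : ℕ) (hkn : k ≤ n) (g : Fin (n - k) → Fin k) : MP n := by
  refine ⟨lowFun n k hkn g, fun i => ?_, fun i => ?_⟩
  · rcases lowFun_lt n k hkn g i with h | h
    · exact lowFun_id hkn g _ h
    · rw [h]; exact h
  · by_cases h : (i : ℕ) < k
    · rw [lowFun_id hkn g i h]
    · rw [lowFun_apply_ge hkn g i h]
      have h2 : (g ⟨(i : ℕ) - k, by have := i.isLt; omega⟩ : ℕ) < k := Fin.isLt _
      exact Fin.mk_le_of_le_val (by omega)

lemma lowMP_injective (n k : ℕ) (hk : 0 < k) (hkn : k ≤ n) :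
    Function.Injective (lowMP n k hkn) := by
  intro g g' h
  funext j
  have hj : (k + (j : ℕ)) < n := by have := j.isLt; omega
  have h2 : lowFun n k hkn g ⟨k + (j : ℕ), hj⟩ = lowFun n k hkn g' ⟨k + (j : ℕ), hj⟩ :=
    congrFun (congrArg Subtype.val h) _
  rw [lowFun_apply_ge hkn g _ (by simp), lowFun_apply_ge hkn g' _ (by simp)] at h2
  have h3 := congrArg Fin.val h2
  simp only [Fin.val_mk] at h3
  apply Fin.ext
  simpa using h3

lemma lower (k : ℕ) (hk : 0 < k) (hkn : k ≤ n) : k ^ (n - k) ≤ bell n := by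
  rw [bell_eq]
  calc k ^ (n - k) = Fintype.card (Fin (n - k) → Fin k) := by simp
    _ ≤ Fintype.card (MP n) := Fintype.card_le_of_injective _ (lowMP_injective n k hk hkn)

/-! ### Few-blocks bound -/

noncomputable def fix (f : MP n) : Finset (Fin n) := Finset.univ.filter (fun i => f.1 i = i)

lemma mem_fix (f : MP n) (i : Fin n) : f.1 i ∈ fix f := by
  simp only [fix, Finset.mem_filter, Finset.mem_univ, true_and]
  exact f.2.1 i

noncomputable def encU (hn : 0 < n) (f : MP n) : Fin (fix f).card → Fin n :=
  fun j => (((fix f).orderIsoOfFin rfl) j : Fin n)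

noncomputable def encV (f : MP n) : Fin n → Fin (fix f).card :=
  fun i => ((fix f).orderIsoOfFin rfl).symm ⟨f.1 i, mem_fix f i⟩

lemma enc_recover (hn : 0 < n) (f : MP n) (i : Fin n) :
    encU hn f (encV f i) = f.1 i := by
  unfold encU encV
  simp

noncomputable def encU' (m : ℕ) (hn : 0 < n) (f : MP n) (hf : (fix f).card ≤ m) :
    Fin m → Fin n :=
  fun j => if h : (j : ℕ) < (fix f).card then encU hn f ⟨j, h⟩ else ⟨0, hn⟩

noncomputable def encV' (m : ℕ) (f : MP n) (hf : (fix f).card ≤ m) : Fin n → Fin m :=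
  fun i => ⟨(encV f i : ℕ), lt_of_lt_of_le (Fin.isLt _) hf⟩

lemma enc_recover' (m : ℕ) (hn : 0 < n) (f : MP n) (hf : (fix f).card ≤ m) (i : Fin n) :
    encU' m hn f hf (encV' m f hf i) = f.1 i := by
  show (if h : ((⟨(encV f i : ℕ), lt_of_lt_of_le (Fin.isLt _) hf⟩ : Fin m) : ℕ) < (fix f).card
      then encU hn f ⟨_, h⟩ else ⟨0, hn⟩) = f.1 i
  rw [dif_pos (show ((⟨(encV f i : ℕ), lt_of_lt_of_le (Fin.isLt _) hf⟩ : Fin m) : ℕ)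
      < (fix f).card from (encV f i).isLt)]
  have e : (⟨((⟨(encV f i : ℕ), lt_of_lt_of_le (Fin.isLt _) hf⟩ : Fin m) : ℕ),
      (encV f i).isLt⟩ : Fin (fix f).card) = encV f i := Fin.ext rfl
  rw [e]
  exact enc_recover hn f i

lemma few (m : ℕ) (hn : 0 < n) :
    Fintype.card {f : MP n // (fix f).card ≤ m} ≤ n ^ m * m ^ n := by
  have key : Fintype.card {f : MP n // (fix f).card ≤ m}
      ≤ Fintype.card ((Fin m → Fin n) × (Fin n → Fin m)) := by
    apply Fintype.card_le_of_injective
      (fun p => (encU' m hn p.1 p.2, encV' m p.1 p.2))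
    intro p q h
    have h1 : encU' m hn p.1 p.2 = encU' m hn q.1 q.2 := congrArg Prod.fst h
    have h2 : encV' m p.1 p.2 = encV' m q.1 q.2 := congrArg Prod.snd h
    apply Subtype.ext; apply Subtype.ext
    funext i
    calc p.1.1 i = encU' m hn p.1 p.2 (encV' m p.1 p.2 i) := (enc_recover' m hn p.1 p.2 i).symm
      _ = encU' m hn q.1 q.2 (encV' m q.1 q.2 i) := by rw [h1, h2]
      _ = q.1.1 i := enc_recover' m hn q.1 q.2 i
  simpa using key

/-! ### Extension bound -/

noncomputable def extT (m : ℕ) (f : MP n) (hf : m + 1 ≤ (fix f).card) (j : Fin (m + 1)) :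
    Fin n :=
  (((fix f).orderIsoOfFin rfl) ⟨(j : ℕ), lt_of_lt_of_le j.isLt hf⟩ : Fin n)

lemma extT_fix (m : ℕ) (f : MP n) (hf : m + 1 ≤ (fix f).card) (j : Fin (m + 1)) :
    f.1 (extT m f hf j) = extT m f hf j := by
  have h := (((fix f).orderIsoOfFin rfl) ⟨(j : ℕ), lt_of_lt_of_le j.isLt hf⟩).2
  simp only [fix, Finset.mem_filter, Finset.mem_univ, true_and] at h
  exact h

noncomputable def extFun (m : ℕ) (f : MP n) (hf : m + 1 ≤ (fix f).card) (j : Fin (m + 1)) :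
    Fin (n + 1) → Fin (n + 1) :=
  fun i => if h : (i : ℕ) < n
    then ⟨(f.1 ⟨i, h⟩ : ℕ), lt_of_lt_of_le (Fin.isLt _) n.le_succ⟩
    else ⟨(extT m f hf j : ℕ), lt_of_lt_of_le (Fin.isLt _) n.le_succ⟩

lemma extFun_lt (m : ℕ) (f : MP n) (hf : m + 1 ≤ (fix f).card) (j : Fin (m + 1))
    (i : Fin (n + 1)) (h : (i : ℕ) < n) :
    extFun m f hf j i = ⟨(f.1 ⟨i, h⟩ : ℕ), lt_of_lt_of_le (Fin.isLt _) n.le_succ⟩ :=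
  dif_pos h

lemma extFun_last (m : ℕ) (f : MP n) (hf : m + 1 ≤ (fix f).card) (j : Fin (m + 1))
    (i : Fin (n + 1)) (h : ¬ (i : ℕ) < n) :
    extFun m f hf j i = ⟨(extT m f hf j : ℕ), lt_of_lt_of_le (Fin.isLt _) n.le_succ⟩ :=
  dif_neg h

noncomputable def extMP (m : ℕ) (p : {f : MP n // m + 1 ≤ (fix f).card} × Fin (m + 1)) :
    MP (n + 1) := by
  refine ⟨extFun m p.1.1 p.1.2 p.2, fun i => ?_, fun i => ?_⟩
  · by_cases h : (i : ℕ) < n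
    · rw [extFun_lt m p.1.1 p.1.2 p.2 i h]
      have h2 : ((⟨(p.1.1.1 ⟨i, h⟩ : ℕ), lt_of_lt_of_le (Fin.isLt _) n.le_succ⟩ : Fin (n+1)) : ℕ)
          < n := Fin.isLt (p.1.1.1 ⟨i, h⟩)
      rw [extFun_lt m p.1.1 p.1.2 p.2 _ h2]
      apply Fin.ext
      show (p.1.1.1 ⟨_, _⟩ : ℕ) = _
      have e : (⟨((⟨(p.1.1.1 ⟨i, h⟩ : ℕ), lt_of_lt_of_le (Fin.isLt _) n.le_succ⟩ : Fin (n+1)) : ℕ),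
          h2⟩ : Fin n) = p.1.1.1 ⟨i, h⟩ := Fin.ext rfl
      rw [e]
      exact congrArg Fin.val (p.1.1.2.1 _)
    · rw [extFun_last m p.1.1 p.1.2 p.2 i h]
      have h2 : ((⟨(extT m p.1.1 p.1.2 p.2 : ℕ), lt_of_lt_of_le (Fin.isLt _) n.le_succ⟩
          : Fin (n+1)) : ℕ) < n := Fin.isLt (extT m p.1.1 p.1.2 p.2)
      rw [extFun_lt m p.1.1 p.1.2 p.2 _ h2]
      apply Fin.ext
      show (p.1.1.1 ⟨_, _⟩ : ℕ) = _
      have e : (⟨((⟨(extT m p.1.1 p.1.2 p.2 : ℕ), lt_of_lt_of_le (Fin.isLt _) n.le_succ⟩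
          : Fin (n+1)) : ℕ), h2⟩ : Fin n) = extT m p.1.1 p.1.2 p.2 := Fin.ext rfl
      rw [e]
      exact congrArg Fin.val (extT_fix m p.1.1 p.1.2 p.2)
  · by_cases h : (i : ℕ) < n
    · rw [extFun_lt m p.1.1 p.1.2 p.2 i h]
      exact Fin.mk_le_of_le_val (p.1.1.2.2 ⟨(i : ℕ), h⟩)
    · rw [extFun_last m p.1.1 p.1.2 p.2 i h]
      have h2 : (extT m p.1.1 p.1.2 p.2 : ℕ) < n := Fin.isLt _
      exact Fin.mk_le_of_le_val (by omega)

lemma ext_injective (m : ℕ) : Function.Injective (extMP (n := n) m) := by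
  intro p q h
  have hfun : extFun m p.1.1 p.1.2 p.2 = extFun m q.1.1 q.1.2 q.2 :=
    congrArg Subtype.val h
  have hfg : p.1.1 = q.1.1 := by
    apply Subtype.ext; funext x
    have h2 := congrFun hfun ⟨(x : ℕ), lt_of_lt_of_le x.isLt n.le_succ⟩
    rw [extFun_lt m p.1.1 p.1.2 p.2 _ x.isLt, extFun_lt m q.1.1 q.1.2 q.2 _ x.isLt] at h2
    have h3 := congrArg Fin.val h2
    simp only [Fin.val_mk] at h3
    apply Fin.ext
    simpa using h3
  have hlast := congrFun hfun ⟨n, n.lt_succ_self⟩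
  rw [extFun_last m p.1.1 p.1.2 p.2 _ (by simp), extFun_last m q.1.1 q.1.2 q.2 _ (by simp)]
    at hlast
  have hv := congrArg Fin.val hlast
  simp only [Fin.val_mk] at hv
  rcases p with ⟨⟨f, hf⟩, j⟩
  rcases q with ⟨⟨g, hg⟩, j'⟩
  simp only at hfg hv
  subst hfg
  have ht : (((fix f).orderIsoOfFin rfl) ⟨(j : ℕ), lt_of_lt_of_le j.isLt hf⟩
        : { x // x ∈ fix f })
      = (((fix f).orderIsoOfFin rfl) ⟨(j' : ℕ), lt_of_lt_of_le j'.isLt hg⟩) := by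
    apply Subtype.ext; apply Fin.ext; exact hv
  have h5 := ((fix f).orderIsoOfFin rfl).injective ht
  have hjj : (j : ℕ) = (j' : ℕ) := by simpa using h5
  have hj : j = j' := Fin.ext hjj
  rw [hj]

lemma ext_bound (m : ℕ) :
    (m + 1) * Fintype.card {f : MP n // m + 1 ≤ (fix f).card} ≤ Fintype.card (MP (n + 1)) := by
  have := Fintype.card_le_of_injective _ (ext_injective (n := n) m)
  rw [Fintype.card_prod, Fintype.card_fin] at this
  calc (m + 1) * Fintype.card {f : MP n // m + 1 ≤ (fix f).card}
      = Fintype.card {f : MP n // m + 1 ≤ (fix f).card} * (m + 1) := Nat.mul_comm _ _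
    _ ≤ _ := this

lemma key (m : ℕ) (hn : 0 < n) :
    (m + 1) * (bell n - n ^ m * m ^ n) ≤ bell (n + 1) := by
  have hc : Fintype.card {f : MP n // ¬ ((fix f).card ≤ m)}
      = Fintype.card (MP n) - Fintype.card {f : MP n // (fix f).card ≤ m} :=
    Fintype.card_subtype_compl _
  have hcongr : Fintype.card {f : MP n // m + 1 ≤ (fix f).card}
      = Fintype.card {f : MP n // ¬ ((fix f).card ≤ m)} :=
    Fintype.card_congr (Equiv.subtypeEquivRight (by intro f; omega))
  have h1 := ext_bound (n := n) m
  rw [hcongr, hc] at h1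
  rw [bell_eq n, bell_eq (n+1)]
  calc (m+1) * (Fintype.card (MP n) - n ^ m * m ^ n)
      ≤ (m+1) * (Fintype.card (MP n) - Fintype.card {f : MP n // (fix f).card ≤ m}) := by
        apply Nat.mul_le_mul_left
        apply Nat.sub_le_sub_left (few m hn)
    _ ≤ _ := h1

lemma eventually_big (m : ℕ) (hm : 2 ≤ m) :
    ∀ᶠ n : ℕ in Filter.atTop, 2 * (n ^ m * m ^ n) ≤ bell n := by
  have hm0 : (0 : ℝ) < m := by positivity
  have hr : (1 : ℝ) < ((m : ℝ) + 1) / m := by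
    rw [lt_div_iff₀ hm0]; linarith
  have htend := tendsto_pow_const_div_const_pow_of_one_lt m hr
  have hc : (0 : ℝ) < (2 * ((m : ℝ) + 1) ^ (m + 1))⁻¹ := by positivity
  have hev := htend.eventually (eventually_le_nhds hc)
  filter_upwards [hev, Filter.eventually_ge_atTop (m + 1)] with n hn hn2
  -- real inequality
  have hstep : 2 * ((n : ℝ) ^ m * (m : ℝ) ^ n) ≤ ((m : ℝ) + 1) ^ (n - (m + 1)) := by
    have hmn : (0 : ℝ) < (m : ℝ) ^ n := by positivity
    have h1 : (n : ℝ) ^ m ≤ (2 * ((m : ℝ) + 1) ^ (m + 1))⁻¹ * (((m : ℝ) + 1) / m) ^ n := by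
      rw [div_le_iff₀ (by positivity)] at hn
      linarith [hn]
    have h2 : ((m : ℝ) + 1) ^ (n - (m + 1))
        = ((m : ℝ) + 1) ^ n * (((m : ℝ) + 1) ^ (m + 1))⁻¹ :=
      pow_sub₀ _ (by positivity) hn2
    rw [h2]
    have h3 : (((m : ℝ) + 1) / m) ^ n = ((m : ℝ) + 1) ^ n / (m : ℝ) ^ n := div_pow _ _ n
    calc 2 * ((n : ℝ) ^ m * (m : ℝ) ^ n)
        ≤ 2 * (((2 * ((m : ℝ) + 1) ^ (m + 1))⁻¹ * (((m : ℝ) + 1) / m) ^ n) * (m : ℝ) ^ n) := by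
          apply mul_le_mul_of_nonneg_left _ (by norm_num)
          exact mul_le_mul_of_nonneg_right h1 hmn.le
      _ = ((m : ℝ) + 1) ^ n * (((m : ℝ) + 1) ^ (m + 1))⁻¹ := by
          rw [h3]
          field_simp
  have hnat : 2 * (n ^ m * m ^ n) ≤ (m + 1) ^ (n - (m + 1)) := by
    have := hstep
    rw [show ((m : ℝ) + 1) = ((m + 1 : ℕ) : ℝ) by push_cast; ring] at this
    rw [← Nat.cast_le (α := ℝ)]
    push_cast
    convert this using 2 <;> push_cast <;> rfl
  calc 2 * (n ^ m * m ^ n) ≤ (m + 1) ^ (n - (m + 1)) := hnat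
    _ ≤ bell n := lower (m + 1) (by omega) hn2

end BellAux

theorem stmt_11 :
    Filter.Tendsto (fun n : ℕ => (bell n : ℝ) / (bell (n + 1) : ℝ))
      Filter.atTop (nhds 0) := by
  rw [NormedAddCommGroup.tendsto_nhds_zero]
  intro ε hε
  set m : ℕ := ⌈2 / ε⌉₊ + 2 with hmdef
  have hm : 2 ≤ m := by omega
  have hεm : 2 / ((m : ℝ) + 1) < ε := by
    have h1 : 2 / ε ≤ (⌈2 / ε⌉₊ : ℝ) := Nat.le_ceil _
    have h2 : (2 : ℝ) / ε < (m : ℝ) + 1 := by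
      have : ((⌈2 / ε⌉₊ : ℕ) : ℝ) + 3 = (m : ℝ) + 1 := by push_cast [hmdef]; ring
      linarith
    rw [div_lt_iff₀ (by positivity)] at h2 ⊢
    nlinarith
  filter_upwards [BellAux.eventually_big m hm, Filter.eventually_ge_atTop 1] with n hbig hn1
  have hkey := BellAux.key (n := n) m (by omega)
  have hXB : n ^ m * m ^ n ≤ bell n := le_trans (by omega) hbig
  have hB' : (0 : ℝ) < (bell (n + 1) : ℝ) := by
    exact_mod_cast BellAux.bell_pos (n + 1)
  have hB : (0 : ℝ) < (bell n : ℝ) := by exact_mod_cast BellAux.bell_pos n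
  -- cast key inequality
  have hkeyR : ((m : ℝ) + 1) * ((bell n : ℝ) - (n ^ m * m ^ n : ℕ)) ≤ (bell (n + 1) : ℝ) := by
    have := hkey
    rw [← Nat.cast_le (α := ℝ)] at this
    push_cast [Nat.cast_sub hXB] at this
    push_cast
    convert this using 2
  have hbigR : 2 * ((n ^ m * m ^ n : ℕ) : ℝ) ≤ (bell n : ℝ) := by
    exact_mod_cast hbig
  have hhalf : (bell n : ℝ) / 2 ≤ (bell n : ℝ) - ((n ^ m * m ^ n : ℕ) : ℝ) := by linarith
  have hlow : ((m : ℝ) + 1) * ((bell n : ℝ) / 2) ≤ (bell (n + 1) : ℝ) := by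
    calc ((m : ℝ) + 1) * ((bell n : ℝ) / 2)
        ≤ ((m : ℝ) + 1) * ((bell n : ℝ) - ((n ^ m * m ^ n : ℕ) : ℝ)) := by
          apply mul_le_mul_of_nonneg_left hhalf (by positivity)
      _ ≤ _ := hkeyR
  have hratio : (bell n : ℝ) / (bell (n + 1) : ℝ) ≤ 2 / ((m : ℝ) + 1) := by
    rw [div_le_div_iff₀ hB' (by positivity)]
    nlinarith
  have hnonneg : (0 : ℝ) ≤ (bell n : ℝ) / (bell (n + 1) : ℝ) := by positivity
  rw [Real.norm_eq_abs, abs_of_nonneg hnonneg]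
  exact lt_of_le_of_lt hratio hεm
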